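/- arXiv:2207.13014 — 2 statements merged into one kernel-verified Lean document; each statement's English description precedes it below -/
import Mathlib

section
/- If the C^0 continuity constraints hold, then for every t ∈ [c_0, c_J), β(t) = γ_{1,0} + Σ_{j=1}^{J} Σ_{d=1}^{D} γ_{j,d} · ( min{ max(0, t − c_{j−1}), c_j − c_{j−1} } )^d. -/
lemma sum_range_split_aux (f : ℕ → ℝ) (D : ℕ) :
    ∑ i ∈ Finset.range (D+1), f i = f 0 + ∑ i ∈ Finset.Icc 1 D, f i := by
  induction D with
  | zero => simp
  | succ n ih =>
      rw [Finset.sum_range_succ, ih,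
        show Finset.Icc 1 (n+1) = Finset.Ioc 0 (n+1) from (Finset.Icc_add_one_left_eq_Ioc 0 (n+1)),
        Finset.sum_Ioc_succ_top (Nat.zero_le n), show Finset.Icc 1 n = Finset.Ioc 0 n from Finset.Icc_add_one_left_eq_Ioc 0 n]
      ring

lemma icc_sum_split_aux (f : ℕ → ℝ) (m : ℕ) (hm : 1 ≤ m) :
    ∑ j ∈ Finset.Icc 1 m, f j = (∑ j ∈ Finset.Icc 1 (m-1), f j) + f m := by
  conv_lhs => rw [show m = (m-1)+1 by omega]
  rw [show Finset.Icc 1 (m-1+1) = Finset.Ioc 0 (m-1+1) from (Finset.Icc_add_one_left_eq_Ioc 0 _),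
    Finset.sum_Ioc_succ_top (Nat.zero_le _), show Finset.Icc 1 (m-1) = Finset.Ioc 0 (m-1) from Finset.Icc_add_one_left_eq_Ioc 0 (m-1), show (m-1)+1 = m by omega]

lemma icc_sum_consec_aux (f : ℕ → ℝ) (k J : ℕ) (h : k ≤ J) :
    (∑ j ∈ Finset.Icc 1 k, f j) + ∑ j ∈ Finset.Icc (k+1) J, f j
      = ∑ j ∈ Finset.Icc 1 J, f j := by
  rw [show Finset.Icc 1 k = Finset.Ioc 0 k from (Finset.Icc_add_one_left_eq_Ioc 0 _),
    show Finset.Icc 1 J = Finset.Ioc 0 J from (Finset.Icc_add_one_left_eq_Ioc 0 _),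
    Finset.Icc_add_one_left_eq_Ioc]
  exact Finset.sum_Ioc_consecutive f (Nat.zero_le k) h

/-- If the C⁰ continuity constraints hold, then on `[c 0, c J)` the piecewise
polynomial `β` has the single global representation
`β(t) = γ₁₀ + Σ_{j=1}^{J} Σ_{d=1}^{D} γ_{j,d} (min(max(0, t − c_{j−1}), c_j − c_{j−1}))^d`. -/
theorem piecewise_poly_global_representation
    (J D : ℕ) (hJ : 1 ≤ J) (c : ℕ → ℝ)
    (hc : ∀ j, j < J → c j < c (j + 1))
    (γ : ℕ → ℕ → ℝ) (β : ℝ → ℝ)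
    (hβ : ∀ j, 1 ≤ j → j ≤ J → ∀ t : ℝ, c (j - 1) ≤ t → t < c j →
      β t = ∑ d ∈ Finset.range (D + 1), γ j d * (t - c (j - 1)) ^ d)
    (hcont : ∀ j, 1 ≤ j → j ≤ J - 1 →
      γ (j + 1) 0 = ∑ d ∈ Finset.range (D + 1), γ j d * (c j - c (j - 1)) ^ d) :
    ∀ t : ℝ, c 0 ≤ t → t < c J →
      β t = γ 1 0 + ∑ j ∈ Finset.Icc 1 J, ∑ d ∈ Finset.Icc 1 D,
        γ j d * (min (max 0 (t - c (j - 1))) (c j - c (j - 1))) ^ d := by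
  -- monotonicity of c up to J
  have hmono : ∀ i j : ℕ, i ≤ j → j ≤ J → c i ≤ c j := by
    intro i j hij hjJ
    induction j with
    | zero => rw [Nat.le_zero.mp hij]
    | succ n ih =>
        rcases Nat.lt_or_ge i (n+1) with h | h
        · exact le_trans (ih (Nat.lt_succ_iff.mp h) (le_trans (Nat.le_succ n) hjJ))
            (le_of_lt (hc n (Nat.lt_of_succ_le hjJ)))
        · rw [le_antisymm hij h]
  -- accumulated continuity
  have hacc : ∀ k : ℕ, 1 ≤ k → k ≤ J →
      γ 1 0 + ∑ j ∈ Finset.Icc 1 (k-1), ∑ d ∈ Finset.Icc 1 D,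
        γ j d * (c j - c (j-1)) ^ d = γ k 0 := by
    intro k
    induction k with
    | zero => intro h; omega
    | succ n ih =>
        intro _ hnJ
        rcases Nat.eq_zero_or_pos n with h0 | hn1
        · subst h0; simp
        · have hrec := ih hn1 (le_trans (Nat.le_succ n) hnJ)
          rw [show (n+1-1 : ℕ) = n by omega,
            icc_sum_split_aux _ n hn1, ← add_assoc, hrec,
            hcont n hn1 (by omega), sum_range_split_aux]
          simp
  intro t ht0 htJ
  -- find the block k containing t
  set S : Finset ℕ := (Finset.Icc 1 J).filter (fun j => c (j-1) ≤ t) with hS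
  have h1S : (1:ℕ) ∈ S := by
    simp [hS, Finset.mem_filter, Finset.mem_Icc, hJ, ht0]
  have hSne : S.Nonempty := ⟨1, h1S⟩
  set k := S.max' hSne with hk
  have hkS : k ∈ S := S.max'_mem hSne
  have hk1 : 1 ≤ k := by
    have := (Finset.mem_filter.mp hkS).1; exact (Finset.mem_Icc.mp this).1
  have hkJ : k ≤ J := by
    have := (Finset.mem_filter.mp hkS).1; exact (Finset.mem_Icc.mp this).2
  have hkle : c (k-1) ≤ t := (Finset.mem_filter.mp hkS).2
  have hklt : t < c k := by
    rcases eq_or_lt_of_le hkJ with he | hlt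
    · rw [he]; exact htJ
    · by_contra hge
      push_neg at hge
      have : k + 1 ∈ S := by
        simp only [hS, Finset.mem_filter, Finset.mem_Icc]
        refine ⟨⟨by omega, by omega⟩, ?_⟩
        simpa using hge
      have := S.le_max' _ this
      omega
  -- evaluate β
  rw [hβ k hk1 hkJ t hkle hklt, sum_range_split_aux, ← hacc k hk1 hkJ]
  -- split the RHS sum at k
  have hsum : ∑ j ∈ Finset.Icc 1 J, ∑ d ∈ Finset.Icc 1 D,
      γ j d * (min (max 0 (t - c (j - 1))) (c j - c (j - 1))) ^ d
      = (∑ j ∈ Finset.Icc 1 (k-1), ∑ d ∈ Finset.Icc 1 D,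
          γ j d * (c j - c (j-1)) ^ d)
        + ∑ d ∈ Finset.Icc 1 D, γ k d * (t - c (k-1)) ^ d := by
    rw [← icc_sum_consec_aux _ k J hkJ, icc_sum_split_aux _ k hk1]
    have hz : ∑ j ∈ Finset.Icc (k+1) J, ∑ d ∈ Finset.Icc 1 D,
        γ j d * (min (max 0 (t - c (j - 1))) (c j - c (j - 1))) ^ d = 0 := by
      apply Finset.sum_eq_zero
      intro j hj
      have hj' := Finset.mem_Icc.mp hj
      have hck : c k ≤ c (j-1) := hmono k (j-1) (by omega) (by omega)
      have hle : t - c (j-1) ≤ 0 := by linarith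
      have hpos : 0 < c j - c (j-1) := by
        have := hc (j-1) (by omega)
        rw [show (j-1)+1 = j by omega] at this
        linarith
      rw [max_eq_left hle, min_eq_left (le_of_lt hpos)]
      apply Finset.sum_eq_zero
      intro d hd
      rw [zero_pow (by have := (Finset.mem_Icc.mp hd).1; omega), mul_zero]
    have hmid : ∀ j ∈ Finset.Icc 1 (k-1),
        (∑ d ∈ Finset.Icc 1 D,
          γ j d * (min (max 0 (t - c (j - 1))) (c j - c (j - 1))) ^ d)
        = ∑ d ∈ Finset.Icc 1 D, γ j d * (c j - c (j-1)) ^ d := by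
      intro j hj
      have hj' := Finset.mem_Icc.mp hj
      have hcj : c j ≤ c (k-1) := hmono j (k-1) (by omega) (by omega)
      have hcj1 : c (j-1) ≤ c j := hmono (j-1) j (by omega) (by omega)
      have h1 : c j - c (j-1) ≤ t - c (j-1) := by linarith
      have h2 : (0:ℝ) ≤ t - c (j-1) := by linarith
      rw [max_eq_right h2, min_eq_right h1]
    have hkk : (∑ d ∈ Finset.Icc 1 D,
        γ k d * (min (max 0 (t - c (k - 1))) (c k - c (k - 1))) ^ d)
        = ∑ d ∈ Finset.Icc 1 D, γ k d * (t - c (k-1)) ^ d := by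
      have h2 : (0:ℝ) ≤ t - c (k-1) := by linarith
      have h1 : t - c (k-1) ≤ c k - c (k-1) := by linarith
      rw [max_eq_right h2, min_eq_left h1]
    rw [hz, Finset.sum_congr rfl hmid, hkk]
    ring
  rw [hsum]
  ring
end

section
/- Suppose J ≥ 2 and the blocks have equal width Δ > 0, i.e., c_j = c_0 + jΔ for j = 0,…,J. Then β(t + Δ) = β(t) for all t ∈ [c_0, c_{J−1}) if and only if γ_{j,d} = γ_{1,d} for all j = 1,…,J and d = 0,…,D. (Thus assuming homogeneous basis-approximation coefficients across all blocks is equivalent to assuming β is cyclical with period equal to the block length.) -/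
open Polynomial in
lemma coeff_eq_of_eval_eq_on_Ico (n : ℕ) (a b : ℕ → ℝ) (Δ : ℝ) (hΔ : 0 < Δ)
    (h : ∀ x : ℝ, 0 ≤ x → x < Δ →
      ∑ d ∈ Finset.range n, a d * x ^ d = ∑ d ∈ Finset.range n, b d * x ^ d) :
    ∀ d < n, a d = b d := by
  set p : ℝ[X] := ∑ d ∈ Finset.range n, C (a d - b d) * X ^ d with hp
  have hroot : ∀ x ∈ Set.Ico (0:ℝ) Δ, p.IsRoot x := by
    intro x hx
    have := h x hx.1 hx.2
    simp only [IsRoot, hp, eval_finset_sum, eval_mul, eval_C, eval_pow, eval_X]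
    simp only [sub_mul]
    rw [Finset.sum_sub_distrib, this, sub_self]
  have hp0 : p = 0 := by
    apply p.eq_zero_of_infinite_isRoot
    exact (Set.Ico_infinite hΔ).mono hroot
  intro d hd
  have := congrArg (fun q => Polynomial.coeff q d) hp0
  simp only [hp, Polynomial.finset_sum_coeff, coeff_C_mul, coeff_X_pow,
    coeff_zero, mul_ite, mul_one, mul_zero] at this
  rw [Finset.sum_ite_eq (Finset.range n) d (fun d' => a d' - b d')] at this
  simp only [Finset.mem_range, hd, if_true] at this
  linarith

/-- With `J ≥ 2` equal-width blocks of width `Δ > 0` (so `c_j = c_0 + jΔ`),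
the piecewise polynomial `β` satisfies `β(t + Δ) = β(t)` for all
`t ∈ [c_0, c_{J−1})` if and only if the block coefficients are homogeneous:
`γ_{j,d} = γ_{1,d}` for all `j = 1,…,J` and `d = 0,…,D`. -/
theorem piecewise_poly_periodic_iff_homogeneous
    (J D : ℕ) (hJ : 2 ≤ J) (Δ : ℝ) (hΔ : 0 < Δ) (c : ℕ → ℝ)
    (hcΔ : ∀ j, j ≤ J → c j = c 0 + (j : ℝ) * Δ)
    (γ : ℕ → ℕ → ℝ) (β : ℝ → ℝ)
    (hβ : ∀ j, 1 ≤ j → j ≤ J → ∀ t : ℝ, c (j - 1) ≤ t → t < c j →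
      β t = ∑ d ∈ Finset.range (D + 1), γ j d * (t - c (j - 1)) ^ d) :
    (∀ t : ℝ, c 0 ≤ t → t < c (J - 1) → β (t + Δ) = β t) ↔
      (∀ j, 1 ≤ j → j ≤ J → ∀ d, d ≤ D → γ j d = γ 1 d) := by
  constructor
  · intro hper
    -- step: γ (j+1) d = γ j d for 1 ≤ j ≤ J - 1
    have step : ∀ j, 1 ≤ j → j + 1 ≤ J → ∀ d, d ≤ D → γ (j + 1) d = γ j d := by
      intro j hj1 hjJ d hd
      have key : ∀ x : ℝ, 0 ≤ x → x < Δ →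
          ∑ d ∈ Finset.range (D + 1), γ (j + 1) d * x ^ d
            = ∑ d ∈ Finset.range (D + 1), γ j d * x ^ d := by
        intro x hx0 hxΔ
        set t := c (j - 1) + x with ht
        have hcj1 : c (j - 1) = c 0 + ((j : ℝ) - 1) * Δ := by
          rw [hcΔ (j - 1) (by omega)]
          congr 1
          rw [Nat.cast_sub hj1]; norm_num
        have hcj : c j = c 0 + (j : ℝ) * Δ := hcΔ j (by omega)
        have hcj1' : c (j + 1) = c 0 + ((j : ℝ) + 1) * Δ := by
          rw [hcΔ (j + 1) hjJ]; push_cast; ring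
        have hcJ1 : c (J - 1) = c 0 + ((J : ℝ) - 1) * Δ := by
          rw [hcΔ (J - 1) (by omega), Nat.cast_sub (by omega)]; norm_num
        have ht1 : c (j - 1) ≤ t := by simp [ht, hx0]
        have ht2 : t < c j := by rw [ht, hcj1, hcj]; nlinarith
        have hβt : β t = ∑ d ∈ Finset.range (D + 1), γ j d * x ^ d := by
          rw [hβ j hj1 (by omega) t ht1 ht2]; simp [ht]
        have ht1' : c ((j + 1) - 1) ≤ t + Δ := by
          simp only [Nat.add_sub_cancel, hcj]
          rw [ht, hcj1]; nlinarith
        have ht2' : t + Δ < c (j + 1) := by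
          rw [ht, hcj1, hcj1']; nlinarith
        have hβt' : β (t + Δ) = ∑ d ∈ Finset.range (D + 1), γ (j + 1) d * x ^ d := by
          rw [hβ (j + 1) (by omega) hjJ (t + Δ) ht1' ht2']
          simp only [Nat.add_sub_cancel, hcj, ht, hcj1]
          ring_nf
          exact Finset.sum_congr rfl (fun _ _ => mul_comm _ _)
        have hc0t : c 0 ≤ t := by
          rw [ht, hcj1]
          have : (0:ℝ) ≤ ((j:ℝ) - 1) * Δ := by
            have : (1:ℝ) ≤ (j:ℝ) := by exact_mod_cast hj1
            nlinarith
          linarith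
        have htJ : t < c (J - 1) := by
          rw [ht, hcj1, hcJ1]
          have : (j : ℝ) ≤ (J : ℝ) - 1 := by
            have : (j : ℝ) + 1 ≤ (J : ℝ) := by exact_mod_cast hjJ
            linarith
          nlinarith
        rw [← hβt, ← hβt', hper t hc0t htJ]
      exact coeff_eq_of_eval_eq_on_Ico (D + 1) (γ (j + 1)) (γ j) Δ hΔ key d (by omega)
    intro j hj1 hjJ d hd
    induction j with
    | zero => omega
    | succ k ih =>
      rcases Nat.eq_or_lt_of_le hj1 with h1 | h1
      · simp [← h1]
      · have hk1 : 1 ≤ k := by omega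
        rw [step k hk1 hjJ d hd]
        exact ih hk1 (by omega)
  · intro hg t hc0 htJ
    -- find block index
    set x := (t - c 0) / Δ with hx
    have hx0 : 0 ≤ x := div_nonneg (by linarith) hΔ.le
    set k := Nat.floor x with hk
    have hcJ1 : c (J - 1) = c 0 + ((J : ℝ) - 1) * Δ := by
      rw [hcΔ (J - 1) (by omega), Nat.cast_sub (by omega)]; norm_num
    have hxlt : x < (J : ℝ) - 1 := by
      rw [hx, div_lt_iff₀ hΔ]
      rw [hcJ1] at htJ; linarith
    have hkJ : k + 1 ≤ J - 1 := by
      have h1 : (k : ℝ) ≤ x := Nat.floor_le hx0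
      have h2 : (k : ℝ) < (J : ℝ) - 1 := lt_of_le_of_lt h1 hxlt
      have hk' : k < J - 1 := by
        by_contra hcon
        push_neg at hcon
        have : ((J - 1 : ℕ) : ℝ) ≤ (k : ℝ) := by exact_mod_cast hcon
        rw [Nat.cast_sub (by omega)] at this
        norm_num at this; linarith
      omega
    have hck : c k ≤ t := by
      rw [hcΔ k (by omega)]
      have h1 : (k : ℝ) ≤ (t - c 0) / Δ := Nat.floor_le hx0
      have h2 := (le_div_iff₀ hΔ).mp h1
      linarith
    have hck1 : t < c (k + 1) := by
      rw [hcΔ (k + 1) (by omega)]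
      have : x < (k : ℝ) + 1 := Nat.lt_floor_add_one x
      rw [hx, div_lt_iff₀ hΔ] at this
      push_cast; linarith
    have hck2 : c (k + 1) = c k + Δ := by
      rw [hcΔ (k + 1) (by omega), hcΔ k (by omega)]; push_cast; ring
    have hck3 : c (k + 2) = c (k + 1) + Δ := by
      rw [hcΔ (k + 2) (by omega), hcΔ (k + 1) (by omega)]; push_cast; ring
    have hb1 : β t = ∑ d ∈ Finset.range (D + 1), γ (k + 1) d * (t - c k) ^ d := by
      have := hβ (k + 1) (by omega) (by omega) t (by simpa using hck) hck1
      simpa using this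
    have hb2 : β (t + Δ) = ∑ d ∈ Finset.range (D + 1), γ (k + 2) d * (t - c k) ^ d := by
      have e : k + 2 - 1 = k + 1 := rfl
      have := hβ (k + 2) (by omega) (by omega) (t + Δ)
        (by rw [e, hck2]; linarith)
        (by rw [hck3]; linarith)
      rw [e] at this
      rw [this]
      apply Finset.sum_congr rfl
      intro d _
      congr 2
      rw [hck2]; ring
    rw [hb1, hb2]
    apply Finset.sum_congr rfl
    intro d hd
    rw [hg (k + 2) (by omega) (by omega) d (by simpa using Nat.lt_succ_iff.mp (Finset.mem_range.mp hd)),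
        hg (k + 1) (by omega) (by omega) d (by simpa using Nat.lt_succ_iff.mp (Finset.mem_range.mp hd))]
end
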